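/- Let |Ψ⟩ = (|0⟩|0⟩|e₀⟩ + |1⟩|1⟩|e₁⟩)/√2 in ℂ² ⊗ ℂ² ⊗ ℂ² with ⟨e₀|e₁⟩ = sin 2θ real and θ ∈ [π/12, π/4]. Define qubit observables A₀ = B₀ = σ_z, A₁ = B₁ = (√(4sin²2θ − 1)/(2 sin 2θ))σ_x − (1/(2 sin 2θ))σ_z, A₂ = B₂ = −(√(4sin²2θ − 1)/(2 sin 2θ))σ_x − (1/(2 sin 2θ))σ_z. Then the expectation of the Bell operator Σ_i A_i ⊗ B_i − Σ_{i≠j} A_i ⊗ B_j on the reduced state ρ_{AB} = Tr_E|Ψ⟩⟨Ψ| equals 1 + 4 sin 2θ + 1/(sin 2θ). -/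

import Mathlib

open Matrix Kronecker

noncomputable section
set_option maxRecDepth 10000
set_option maxHeartbeats 1000000

def σz : Matrix (Fin 2) (Fin 2) ℂ := !![1, 0; 0, -1]
def σx : Matrix (Fin 2) (Fin 2) ℂ := !![0, 1; 1, 0]

/-- Partial trace over the third (Eve) tensor factor. -/
def ptE (ρ : Matrix ((Fin 2 × Fin 2) × Fin 2) ((Fin 2 × Fin 2) × Fin 2) ℂ) :
    Matrix (Fin 2 × Fin 2) (Fin 2 × Fin 2) ℂ :=
  fun i j => ∑ k : Fin 2, ρ (i, k) (j, k)

/-- Eve's eavesdropping observables: `A₀ = σ_z`,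
`A₁ = (√(4sin²2θ − 1)/(2 sin 2θ))σ_x − (1/(2 sin 2θ))σ_z`,
`A₂ = −(√(4sin²2θ − 1)/(2 sin 2θ))σ_x − (1/(2 sin 2θ))σ_z`. -/
def eveObs (θ : ℝ) : Fin 3 → Matrix (Fin 2) (Fin 2) ℂ :=
  ![σz,
    (Real.sqrt (4 * Real.sin (2 * θ) ^ 2 - 1) / (2 * Real.sin (2 * θ))) • σx
      - (1 / (2 * Real.sin (2 * θ))) • σz,
    -((Real.sqrt (4 * Real.sin (2 * θ) ^ 2 - 1) / (2 * Real.sin (2 * θ))) • σx)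
      - (1 / (2 * Real.sin (2 * θ))) • σz]

/-- The tripartite state `|Ψ⟩ = (|0⟩|0⟩|e₀⟩ + |1⟩|1⟩|e₁⟩)/√2`. -/
def Ψ (e₀ e₁ : Fin 2 → ℂ) : (Fin 2 × Fin 2) × Fin 2 → ℂ :=
  fun p => (1 / Real.sqrt 2 : ℝ) *
    ((if p.1.1 = 0 ∧ p.1.2 = 0 then e₀ p.2 else 0)
      + (if p.1.1 = 1 ∧ p.1.2 = 1 then e₁ p.2 else 0))

def ρmat (s : ℂ) : Matrix (Fin 2 × Fin 2) (Fin 2 × Fin 2) ℂ :=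
  fun p q =>
    if p = (0,0) ∧ q = (0,0) then 1/2
    else if p = (1,1) ∧ q = (1,1) then 1/2
    else if p = (0,0) ∧ q = (1,1) then s/2
    else if p = (1,1) ∧ q = (0,0) then s/2
    else 0

lemma ptE_eq (e₀ e₁ : Fin 2 → ℂ) (s : ℝ)
    (h₀ : star e₀ ⬝ᵥ e₀ = 1) (h₁ : star e₁ ⬝ᵥ e₁ = 1)
    (hov : star e₀ ⬝ᵥ e₁ = (s : ℂ)) :
    ptE (vecMulVec (Ψ e₀ e₁) (star (Ψ e₀ e₁))) = ρmat (s : ℂ) := by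
  have h2 : ((Real.sqrt 2 : ℝ) : ℂ)⁻¹ * ((Real.sqrt 2 : ℝ) : ℂ)⁻¹ = 1/2 := by
    rw [← mul_inv, ← Complex.ofReal_mul, Real.mul_self_sqrt (by norm_num)]
    norm_num
  simp only [dotProduct, Fin.sum_univ_two, Pi.star_apply, Complex.star_def] at h₀ h₁ hov
  have hov' : (starRingEnd ℂ) (e₁ 0) * e₀ 0 + (starRingEnd ℂ) (e₁ 1) * e₀ 1 = (s : ℂ) := by
    have := congrArg (starRingEnd ℂ) hov
    simp only [map_add, _root_.map_mul, Complex.conj_conj, Complex.conj_ofReal] at this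
    linear_combination this
  funext p q
  obtain ⟨a, b⟩ := p
  obtain ⟨c, d⟩ := q
  fin_cases a <;> fin_cases b <;> fin_cases c <;> fin_cases d <;>
    simp [ptE, Ψ, ρmat, vecMulVec_apply, Fin.sum_univ_two]
  · linear_combination ((starRingEnd ℂ) (e₀ 0) * e₀ 0 + (starRingEnd ℂ) (e₀ 1) * e₀ 1) * h2
      + (1/2) * h₀
  · linear_combination ((starRingEnd ℂ) (e₁ 0) * e₀ 0 + (starRingEnd ℂ) (e₁ 1) * e₀ 1) * h2
      + (1/2) * hov'
  · linear_combination ((starRingEnd ℂ) (e₀ 0) * e₁ 0 + (starRingEnd ℂ) (e₀ 1) * e₁ 1) * h2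
      + (1/2) * hov
  · linear_combination ((starRingEnd ℂ) (e₁ 0) * e₁ 0 + (starRingEnd ℂ) (e₁ 1) * e₁ 1) * h2
      + (1/2) * h₁

lemma trace_mul_ρmat (A : Matrix (Fin 2 × Fin 2) (Fin 2 × Fin 2) ℂ) (s : ℂ) :
    (A * ρmat s).trace
      = A (0,0) (0,0) / 2 + A (1,1) (1,1) / 2
        + s / 2 * (A (0,0) (1,1) + A (1,1) (0,0)) := by
  simp [Matrix.trace, Matrix.diag, Matrix.mul_apply, Fintype.sum_prod_type,
    Fin.sum_univ_two, ρmat, Prod.ext_iff]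
  ring

/-- On the reduced state `ρ_AB = Tr_E |Ψ⟩⟨Ψ|`, the three-setting Bell operator
with Eve's observables (taken by both Alice and Bob) has expectation
`1 + 4 sin 2θ + 1/sin 2θ`. -/
theorem eavesdropping_bell_value (e₀ e₁ : Fin 2 → ℂ) (θ : ℝ)
    (hθ : θ ∈ Set.Icc (Real.pi / 12) (Real.pi / 4))
    (h₀ : star e₀ ⬝ᵥ e₀ = 1) (h₁ : star e₁ ⬝ᵥ e₁ = 1)
    (hov : star e₀ ⬝ᵥ e₁ = (Real.sin (2 * θ) : ℂ)) :
    ((((∑ i, eveObs θ i ⊗ₖ eveObs θ i)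
        - ∑ i, ∑ j, if i = j then 0 else eveObs θ i ⊗ₖ eveObs θ j)
      * ptE (vecMulVec (Ψ e₀ e₁) (star (Ψ e₀ e₁)))).trace)
      = ((1 + 4 * Real.sin (2 * θ) + 1 / Real.sin (2 * θ) : ℝ) : ℂ) := by
  obtain ⟨hθ1, hθ2⟩ := hθ
  have hpi := Real.pi_pos
  have hs1 : (1:ℝ)/2 ≤ Real.sin (2*θ) := by
    rw [← Real.sin_pi_div_six]
    apply Real.sin_le_sin_of_le_of_le_pi_div_two <;> nlinarith
  have hs0 : (0:ℝ) < Real.sin (2*θ) := by linarith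
  have hr : Real.sqrt (4 * Real.sin (2*θ)^2 - 1) ^ 2 = 4 * Real.sin (2*θ)^2 - 1 :=
    Real.sq_sqrt (by nlinarith)
  have hsC : Complex.sin (2*(θ:ℂ)) = ((Real.sin (2*θ) : ℝ) : ℂ) := by push_cast; ring_nf
  have hsC0 : Complex.sin (2*(θ:ℂ)) ≠ 0 := by
    rw [hsC]; exact_mod_cast hs0.ne'
  have hrC : ((Real.sqrt (4 * Real.sin (2*θ)^2 - 1) : ℝ) : ℂ)^2
      = 4 * Complex.sin (2*(θ:ℂ))^2 - 1 := by
    rw [hsC, ← Complex.ofReal_pow, hr]; push_cast; ring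
  rw [ptE_eq e₀ e₁ _ h₀ h₁ hov, trace_mul_ρmat]
  simp only [Matrix.sub_apply, Matrix.sum_apply, Fin.sum_univ_three]
  simp (config := {decide := true}) [eveObs, σz, σx, Matrix.kroneckerMap_apply,
    Matrix.smul_apply, Matrix.sub_apply, Matrix.neg_apply, Fin.ext_iff]
  generalize hRR : ((Real.sqrt (4 * Real.sin (2*θ)^2 - 1) : ℝ) : ℂ) = R at hrC ⊢
  generalize hTT : Complex.sin (2*(θ:ℂ)) = T at hrC hsC0 ⊢
  ring_nf
  field_simp
  linear_combination hrC

end
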